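/- Let λ ∈ ℝ with λ ≠ 0, α ∈ ℝ, a ∈ ℝ, and n ∈ ℕ. For every x > 0 with x > |λ·a|, the n-th derivative at x of the function x ↦ x^α · (1 − λ·a/x)^{1/λ} equals (−1)^n · x^{α−n} · n! · (1 − λ·a/x)^{1/λ} · L^{(−α−1)}_{n,λ}(a/(x − a·λ)). -/

import Mathlib

/-- The degenerate falling factorial `(1)_{m,λ} = ∏_{j=0}^{m-1} (1 - jλ)`. -/
noncomputable def degFall (lam : ℝ) (m : ℕ) : ℝ :=
  ∏ j ∈ Finset.range m, (1 - (j : ℝ) * lam)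

/-- Generalized binomial coefficient `binom(n+α, n−m) = (∏_{j=0}^{n−m−1} (n+α−j))/(n−m)!`. -/
noncomputable def genBinom (α : ℝ) (n m : ℕ) : ℝ :=
  (∏ j ∈ Finset.range (n - m), ((n : ℝ) + α - (j : ℝ))) / (Nat.factorial (n - m) : ℝ)

/-- The degenerate generalized Laguerre polynomial `L^{(α)}_{n,λ}(x)`. -/
noncomputable def degLaguerre (lam α : ℝ) (n : ℕ) (x : ℝ) : ℝ :=
  ∑ m ∈ Finset.range (n + 1),
    genBinom α n m * (-1 : ℝ) ^ m * degFall lam m * x ^ m / (Nat.factorial m : ℝ)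

/-- coefficient of `t^m` in `L^{(-α-1)}_{n,λ}(t)`. -/
noncomputable def lagC (lam α : ℝ) (n m : ℕ) : ℝ :=
  genBinom (-α - 1) n m * (-1 : ℝ) ^ m * degFall lam m / (Nat.factorial m : ℝ)

/-- The conjectured form of the n-th derivative, in expanded shape. -/
noncomputable def Gfun (lam α a : ℝ) (n : ℕ) (x : ℝ) : ℝ :=
  (-1 : ℝ) ^ n * (Nat.factorial n : ℝ) *
    ∑ m ∈ Finset.range (n + 1),
      lagC lam α n m * a ^ m * x ^ (α - (n : ℝ) - 1 / lam) * (x - lam * a) ^ (1 / lam - (m : ℝ))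

lemma degFall_succ (lam : ℝ) (m : ℕ) :
    degFall lam (m + 1) = degFall lam m * (1 - (m : ℝ) * lam) := by
  simp [degFall, Finset.prod_range_succ]

lemma factcast (k : ℕ) : ((Nat.factorial (k+1) : ℕ) : ℝ) = ((k:ℝ)+1) * (Nat.factorial k : ℝ) := by
  rw [Nat.factorial_succ]; push_cast; ring

lemma factne (k : ℕ) : (Nat.factorial k : ℝ) ≠ 0 := Nat.cast_ne_zero.2 (Nat.factorial_ne_zero k)

lemma prod_shift (α : ℝ) (n k : ℕ) :
    (∏ j ∈ Finset.range (k+1), ((↑(n+1) : ℝ) + (-α - 1) - (j : ℝ)))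
      = ((n:ℝ) - α) * ∏ j ∈ Finset.range k, ((n : ℝ) + (-α - 1) - (j : ℝ)) := by
  rw [Finset.prod_range_succ']
  have e : ∀ j ∈ Finset.range k, ((↑(n+1):ℝ) + (-α - 1) - (↑(j+1):ℝ))
      = ((n:ℝ) + (-α - 1) - (j:ℝ)) := fun j _ => by push_cast; ring
  rw [Finset.prod_congr rfl e]
  push_cast
  ring

/-- coefficient identity at `m = 0`. -/
lemma lagC_zero (lam α : ℝ) (n : ℕ) :
    -((n : ℝ) + 1) * lagC lam α (n + 1) 0 = (α - n) * lagC lam α n 0 := by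
  simp only [lagC, genBinom, Nat.sub_zero, pow_zero, mul_one, degFall,
    Finset.prod_range_zero, Nat.factorial_zero, Nat.cast_one, div_one]
  rw [prod_shift α n n, factcast n]
  have h1 := factne n
  have h2 : ((n:ℝ)+1) ≠ 0 := by positivity
  field_simp
  ring

/-- coefficient identity at the top `m = n + 1`. -/
lemma lagC_top (lam α : ℝ) (n : ℕ) :
    -((n : ℝ) + 1) * lagC lam α (n + 1) (n + 1) = (1 - lam * n) * lagC lam α n n := by
  simp only [lagC, genBinom, Nat.sub_self, Finset.prod_range_zero, Nat.factorial_zero,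
    Nat.cast_one, div_one, one_mul, degFall_succ, factcast]
  have h1 := factne n
  have h2 : ((n:ℝ)+1) ≠ 0 := by positivity
  field_simp
  ring

/-- coefficient identity in the middle range. -/
lemma lagC_mid (lam α : ℝ) (n m : ℕ) (h : m + 1 ≤ n) :
    -((n : ℝ) + 1) * lagC lam α (n + 1) (m + 1) =
      (α - n - ((m : ℝ) + 1)) * lagC lam α n (m + 1) + (1 - lam * m) * lagC lam α n m := by
  obtain ⟨k, rfl⟩ : ∃ k, n = m + 1 + k := ⟨n - (m+1), by omega⟩
  have e1 : m + 1 + k - (m + 1) = k := by omega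
  have e2 : m + 1 + k + 1 - (m + 1) = k + 1 := by omega
  have e3 : m + 1 + k - m = k + 1 := by omega
  simp only [lagC, genBinom, e1, e2, e3]
  rw [show (m+1+k+1) = (m+1+k)+1 from rfl, prod_shift α (m+1+k) k,
    Finset.prod_range_succ, degFall_succ, factcast k, factcast m]
  have h1 := factne k
  have h2 := factne m
  have h3 : ((k:ℝ)+1) ≠ 0 := by positivity
  have h4 : ((m:ℝ)+1) ≠ 0 := by positivity
  push_cast
  field_simp
  ring

/-- rpow algebra core. -/
lemma rpow_core (lam α a : ℝ) (x : ℝ) (h1 : 0 < x) (h2 : 0 < x - lam * a) (r : ℝ) (m : ℕ) :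
    x ^ r * (1 - lam * a / x) ^ (1 / lam) * (a / (x - a * lam)) ^ m
      = a ^ m * x ^ (r - 1 / lam) * (x - lam * a) ^ (1 / lam - (m : ℝ)) := by
  have hx := h1.ne'
  have hc := h2.ne'
  have e0 : 1 - lam * a / x = (x - lam * a) / x := by field_simp
  rw [e0, Real.div_rpow h2.le h1.le, Real.rpow_sub h1, Real.rpow_sub h2,
    Real.rpow_natCast, mul_comm a lam, div_pow]
  have hxr : x ^ (1 / lam) ≠ 0 := (Real.rpow_pos_of_pos h1 _).ne'
  have hcm : (x - lam * a) ^ m ≠ 0 := pow_ne_zero _ hc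
  field_simp

/-- Equivalence of the theorem's RHS and `Gfun`. -/
lemma rhs_eq_G (lam α a : ℝ) (n : ℕ) (x : ℝ) (h1 : 0 < x) (h2 : 0 < x - lam * a) :
    (-1 : ℝ) ^ n * x ^ (α - (n : ℝ)) * (Nat.factorial n : ℝ) *
        (1 - lam * a / x) ^ (1 / lam) * degLaguerre lam (-α - 1) n (a / (x - a * lam))
      = Gfun lam α a n x := by
  rw [degLaguerre, Gfun, Finset.mul_sum, Finset.mul_sum]
  refine Finset.sum_congr rfl fun m _ => ?_
  have key := rpow_core lam α a x h1 h2 (α - (n : ℝ)) m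
  rw [lagC]
  linear_combination ((-1 : ℝ)^n * (Nat.factorial n : ℝ) * genBinom (-α-1) n m * (-1)^m
    * degFall lam m / (Nat.factorial m : ℝ)) * key

/-- base case. -/
lemma base_eq_G (lam α a : ℝ) (x : ℝ) (h1 : 0 < x) (h2 : 0 < x - lam * a) :
    x ^ α * (1 - lam * a / x) ^ (1 / lam) = Gfun lam α a 0 x := by
  have key := rpow_core lam α a x h1 h2 α 0
  simp only [pow_zero, mul_one, Nat.cast_zero, sub_zero] at key
  simp only [Gfun, lagC, genBinom, degFall, zero_add, Finset.sum_range_one, Finset.range_zero,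
    Nat.sub_zero, Finset.prod_range_zero, Nat.factorial_zero, Nat.cast_one, Nat.cast_zero,
    pow_zero, mul_one, one_mul, div_one, sub_zero]
  linear_combination key

/-- The reindexing / recurrence identity for the sums. -/
lemma sum_step (lam α a : ℝ) (n : ℕ) (B : ℕ → ℝ) :
    ∑ m ∈ Finset.range (n + 2), -((n : ℝ) + 1) * lagC lam α (n + 1) m * a ^ m * B m
      = ∑ m ∈ Finset.range (n + 1),
          ((α - (n : ℝ) - (m : ℝ)) * lagC lam α n m * a ^ m * B m
            + (1 - lam * (m : ℝ)) * lagC lam α n m * a ^ (m + 1) * B (m + 1)) := by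
  rw [Finset.sum_add_distrib,
    show n + 2 = (n + 1) + 1 from rfl,
    Finset.sum_range_succ
      (fun m => -((n : ℝ) + 1) * lagC lam α (n + 1) m * a ^ m * B m) (n + 1),
    Finset.sum_range_succ'
      (fun m => -((n : ℝ) + 1) * lagC lam α (n + 1) m * a ^ m * B m) n,
    Finset.sum_range_succ'
      (fun m => (α - (n : ℝ) - (m : ℝ)) * lagC lam α n m * a ^ m * B m) n,
    Finset.sum_range_succ
      (fun m => (1 - lam * (m : ℝ)) * lagC lam α n m * a ^ (m + 1) * B (m + 1)) n]
  have e0 : -((n : ℝ) + 1) * lagC lam α (n + 1) 0 * a ^ 0 * B 0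
      = (α - (n : ℝ) - ((0:ℕ) : ℝ)) * lagC lam α n 0 * a ^ 0 * B 0 := by
    have := lagC_zero lam α n
    push_cast
    linear_combination (a ^ 0 * B 0) * this
  have etop : -((n : ℝ) + 1) * lagC lam α (n + 1) (n + 1) * a ^ (n + 1) * B (n + 1)
      = (1 - lam * (n : ℝ)) * lagC lam α n n * a ^ (n + 1) * B (n + 1) := by
    have := lagC_top lam α n
    linear_combination (a ^ (n + 1) * B (n + 1)) * this
  have emid : ∑ m ∈ Finset.range n,
        -((n : ℝ) + 1) * lagC lam α (n + 1) (m + 1) * a ^ (m + 1) * B (m + 1)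
      = ∑ m ∈ Finset.range n,
          ((α - (n : ℝ) - ((m : ℝ) + 1)) * lagC lam α n (m + 1) * a ^ (m + 1) * B (m + 1)
            + (1 - lam * (m : ℝ)) * lagC lam α n m * a ^ (m + 1) * B (m + 1)) := by
    refine Finset.sum_congr rfl fun m hm => ?_
    have := lagC_mid lam α n m (Finset.mem_range.1 hm)
    linear_combination (a ^ (m + 1) * B (m + 1)) * this
  rw [e0, etop, emid, Finset.sum_add_distrib]
  push_cast
  ring

/-- the derivative step. -/
lemma hasDerivAt_G (lam α a : ℝ) (hlam : lam ≠ 0) (n : ℕ) (x : ℝ)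
    (h1 : 0 < x) (h2 : 0 < x - lam * a) :
    HasDerivAt (Gfun lam α a n) (Gfun lam α a (n + 1) x) x := by
  have hx := h1.ne'
  have hc := h2.ne'
  -- derivative of each term
  have hterm : ∀ m : ℕ, HasDerivAt
      (fun y : ℝ => lagC lam α n m * a ^ m * y ^ (α - (n : ℝ) - 1 / lam)
        * (y - lam * a) ^ (1 / lam - (m : ℝ)))
      (lagC lam α n m * a ^ m *
        ((α - (n : ℝ) - 1 / lam) * x ^ (α - (n : ℝ) - 1 / lam - 1)
            * (x - lam * a) ^ (1 / lam - (m : ℝ))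
          + x ^ (α - (n : ℝ) - 1 / lam) *
            (1 * (1 / lam - (m : ℝ)) * (x - lam * a) ^ (1 / lam - (m : ℝ) - 1)))) x := by
    intro m
    have hbase : HasDerivAt
        (fun y : ℝ => y ^ (α - (n : ℝ) - 1 / lam) * (y - lam * a) ^ (1 / lam - (m : ℝ)))
        ((α - (n : ℝ) - 1 / lam) * x ^ (α - (n : ℝ) - 1 / lam - 1)
            * (x - lam * a) ^ (1 / lam - (m : ℝ))
          + x ^ (α - (n : ℝ) - 1 / lam) *
            (1 * (1 / lam - (m : ℝ)) * (x - lam * a) ^ (1 / lam - (m : ℝ) - 1))) x :=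
      (Real.hasDerivAt_rpow_const (Or.inl hx)).mul
        (((hasDerivAt_id x).sub_const (lam * a)).rpow_const (Or.inl hc))
    simpa [mul_assoc] using hbase.const_mul (lagC lam α n m * a ^ m)
  have hG := (HasDerivAt.fun_sum (fun m _ => hterm m)
      (u := Finset.range (n + 1))).const_mul ((-1 : ℝ) ^ n * (Nat.factorial n : ℝ))
  have hfun : (Gfun lam α a n) = (fun y => ((-1 : ℝ) ^ n * (Nat.factorial n : ℝ)) *
      ∑ m ∈ Finset.range (n + 1),
        lagC lam α n m * a ^ m * y ^ (α - (n : ℝ) - 1 / lam)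
          * (y - lam * a) ^ (1 / lam - (m : ℝ))) := by
    funext y; rw [Gfun]
  rw [hfun]
  convert hG using 1
  · rfl
  · rfl
  -- the value identity
  rw [Gfun, Finset.mul_sum]
  have hexp : α - ((n:ℝ)+1) - 1/lam = α - (n:ℝ) - 1/lam - 1 := by ring
  have hxp : x ^ (α - (n:ℝ) - 1 / lam) = x ^ (α - (n:ℝ) - 1 / lam - 1) * x := by
    rw [← Real.rpow_add_one hx (α - (n:ℝ) - 1/lam - 1)]
    congr 1
    ring
  have hcq : ∀ r : ℝ, (x - lam*a) ^ r = (x - lam*a) ^ (r - 1) * (x - lam*a) := by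
    intro r
    rw [← Real.rpow_add_one hc (r-1)]
    congr 1
    ring
  calc ∑ m ∈ Finset.range (n+1+1), (-1:ℝ)^(n+1) * (Nat.factorial (n+1) : ℝ) *
          (lagC lam α (n+1) m * a^m * x ^ (α - (↑(n+1):ℝ) - 1/lam)
            * (x - lam*a) ^ (1/lam - (m:ℝ)))
      = ∑ m ∈ Finset.range (n+2), ((-1:ℝ)^n * (Nat.factorial n : ℝ)) *
          (-((n:ℝ)+1) * lagC lam α (n+1) m * a^m *
            (x ^ (α - (n:ℝ) - 1/lam - 1) * (x - lam*a) ^ (1/lam - (m:ℝ)))) := by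
        refine Finset.sum_congr rfl fun m _ => ?_
        rw [Nat.factorial_succ]
        push_cast [hexp]
        ring
    _ = ((-1:ℝ)^n * (Nat.factorial n : ℝ)) * ∑ m ∈ Finset.range (n+2),
          -((n:ℝ)+1) * lagC lam α (n+1) m * a^m *
            (x ^ (α - (n:ℝ) - 1/lam - 1) * (x - lam*a) ^ (1/lam - (m:ℝ))) := by
        rw [Finset.mul_sum]
    _ = _ := by
        rw [sum_step lam α a n
          (fun m => x ^ (α - (n:ℝ) - 1/lam - 1) * (x - lam*a) ^ (1/lam - (m:ℝ)))]
        rw [Finset.mul_sum, Finset.mul_sum]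
        refine Finset.sum_congr rfl fun m _ => ?_
        have hB1 : (x - lam*a) ^ (1/lam - (↑(m+1):ℝ)) = (x - lam*a) ^ (1/lam - (m:ℝ) - 1) := by
          congr 1
          push_cast
          ring
        show ((-1:ℝ)^n * (Nat.factorial n : ℝ)) * _ = _
        rw [hB1, hxp, hcq (1/lam - (m:ℝ))]
        field_simp
        ring

/-- Theorem 2: `dⁿ/dxⁿ [x^α e_λ(−a/x)] = (−1)ⁿ x^{α−n} n! e_λ(−a/x) L^{(−α−1)}_{n,λ}(a/(x−aλ))`,
where `e_λ(−a/x) = (1 − λa/x)^{1/λ}`. -/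
theorem iteratedDeriv_rpow_mul_degExp (lam α a : ℝ) (hlam : lam ≠ 0) (n : ℕ) :
    ∀ x : ℝ, 0 < x → |lam * a| < x →
      iteratedDeriv n (fun y : ℝ => y ^ α * (1 - lam * a / y) ^ (1 / lam)) x =
        (-1 : ℝ) ^ n * x ^ (α - (n : ℝ)) * (Nat.factorial n : ℝ) *
          (1 - lam * a / x) ^ (1 / lam) * degLaguerre lam (-α - 1) n (a / (x - a * lam)) := by
  have hsub : ∀ x : ℝ, |lam * a| < x → 0 < x - lam * a := by
    intro x hx
    have := le_abs_self (lam * a)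
    linarith
  have hpos : ∀ x : ℝ, |lam * a| < x → 0 < x := by
    intro x hx
    have := abs_nonneg (lam * a)
    linarith
  have key : ∀ x : ℝ, |lam * a| < x →
      iteratedDeriv n (fun y : ℝ => y ^ α * (1 - lam * a / y) ^ (1 / lam)) x
        = Gfun lam α a n x := by
    induction n with
    | zero =>
      intro x hx
      rw [iteratedDeriv_zero]
      exact base_eq_G lam α a x (hpos x hx) (hsub x hx)
    | succ n ih =>
      intro x hx
      rw [iteratedDeriv_succ]
      have hev : iteratedDeriv n (fun y : ℝ => y ^ α * (1 - lam * a / y) ^ (1 / lam))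
          =ᶠ[nhds x] Gfun lam α a n := by
        filter_upwards [Ioi_mem_nhds hx] with y hy using ih y hy
      rw [hev.deriv_eq]
      exact (hasDerivAt_G lam α a hlam n x (hpos x hx) (hsub x hx)).deriv
  intro x hx0 hx
  rw [key x hx, ← rhs_eq_G lam α a n x hx0 (hsub x hx)]
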